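/- Let A be a unital alternative algebra over a field F, and let R₁ and R₂ be two-sided ideals of A such that for each i = 1, 2 the algebra A is the internal direct sum of Rᵢ and F·1 (i.e. Rᵢ ∩ F·1 = 0 and Rᵢ + F·1 = A). Then the circle loops of R₁ and R₂ are isomorphic: there is a bijection ψ from the set of quasiregular elements of R₁ onto the set of quasiregular elements of R₂ such that ψ(x ∘ y) = ψ(x) ∘ ψ(y) for all quasiregular x, y ∈ R₁. -/
import Mathlib


/-- The circle operation `x ∘ y = x + y - x * y`. -/
def circ {A : Type*} [NonAssocRing A] (x y : A) : A := x + y - x * y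

/-- `a` is quasiregular: there is `b` with `a + b - ab = 0` and `a + b - ba = 0`. -/
def IsQuasireg {A : Type*} [NonAssocRing A] (a : A) : Prop :=
  ∃ b, a + b - a * b = 0 ∧ a + b - b * a = 0

/-- A subset of a ring is a two-sided ideal if it is an additive subgroup absorbing
multiplication on both sides. -/
def IsTwoSidedIdealSet {A : Type*} [NonAssocRing A] (R : Set A) : Prop :=
  (0 : A) ∈ R ∧ (∀ x ∈ R, ∀ y ∈ R, x + y ∈ R) ∧ (∀ x ∈ R, -x ∈ R) ∧
    ∀ a : A, ∀ r ∈ R, a * r ∈ R ∧ r * a ∈ R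

/-- The circle loop `U*(R)` of an ideal `R`: the quasiregular elements of `R`. -/
def circleLoop {A : Type*} [NonAssocRing A] (R : Set A) : Set A :=
  {x : A | x ∈ R ∧ IsQuasireg x}

theorem one_sub_mul_one_sub' {A : Type*} [NonAssocRing A] (a b : A) :
    (1 - a) * (1 - b) = 1 - circ a b := by
  simp only [circ, mul_sub, sub_mul, one_mul, mul_one]
  abel

theorem isQuasireg_iff' {A : Type*} [NonAssocRing A] (a : A) :
    IsQuasireg a ↔ ∃ v, (1 - a) * v = 1 ∧ v * (1 - a) = 1 := by
  constructor
  · rintro ⟨b, h1, h2⟩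
    refine ⟨1 - b, ?_, ?_⟩
    · rw [one_sub_mul_one_sub']
      have : circ a b = 0 := h1
      rw [this, sub_zero]
    · rw [one_sub_mul_one_sub']
      have : circ b a = 0 := by rw [circ, add_comm b a]; exact h2
      rw [this, sub_zero]
  · rintro ⟨v, h1, h2⟩
    have e1 := one_sub_mul_one_sub' a (1 - v)
    rw [sub_sub_cancel, h1] at e1
    have c1 : circ a (1 - v) = 0 := sub_eq_self.mp e1.symm
    have e2 := one_sub_mul_one_sub' (1 - v) a
    rw [sub_sub_cancel, h2] at e2
    have c2 : circ (1 - v) a = 0 := sub_eq_self.mp e2.symm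
    refine ⟨1 - v, c1, ?_⟩
    rw [show a + (1 - v) - (1 - v) * a = circ (1 - v) a by rw [circ, add_comm]]
    exact c2

theorem exists_proj' {F A : Type*} [Field F] [NonAssocRing A] [Module F A]
    [SMulCommClass F A A] [IsScalarTower F A A] (h1 : (1 : A) ≠ 0)
    (R : Set A) (hR : IsTwoSidedIdealSet R)
    (hdisj : R ∩ Set.range (fun α : F => α • (1 : A)) = {0})
    (hsum : ∀ a : A, ∃ r ∈ R, ∃ α : F, a = r + α • (1 : A)) :
    ∃ π : A → F,
      (∀ a, a - π a • 1 ∈ R) ∧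
      (∀ a (α : F), a - α • 1 ∈ R → π a = α) ∧
      (∀ a b, π (a * b) = π a * π b) ∧
      (∀ (c : F) (a : A), π (c • a) = c * π a) ∧
      (∀ x ∈ R, π (1 - x) = 1) ∧
      (∀ a, π a = 0 → a ∈ R) := by
  obtain ⟨hz, hadd, hneg, habs⟩ := hR
  have hsub : ∀ x ∈ R, ∀ y ∈ R, x - y ∈ R := fun x hx y hy => by
    rw [sub_eq_add_neg]; exact hadd x hx _ (hneg y hy)
  have hsm : ∀ (c : F), ∀ r ∈ R, c • r ∈ R := fun c r hr => by
    have := (habs (c • (1 : A)) r hr).1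
    rwa [smul_mul_assoc, one_mul] at this
  have hone : ∀ c : F, c • (1 : A) = 0 → c = 0 := by
    intro c hc
    by_contra hcne
    apply h1
    calc (1 : A) = c⁻¹ • (c • (1 : A)) := by rw [inv_smul_smul₀ hcne]
    _ = 0 := by rw [hc, smul_zero]
  have hproj : ∀ a : A, ∃ α : F, a - α • 1 ∈ R := by
    intro a
    obtain ⟨r, hr, α, ha⟩ := hsum a
    exact ⟨α, by rw [ha]; simpa using hr⟩
  set π : A → F := fun a => (hproj a).choose with hπ
  have hspec : ∀ a, a - π a • 1 ∈ R := fun a => (hproj a).choose_spec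
  have huniq : ∀ a (α : F), a - α • 1 ∈ R → π a = α := by
    intro a α ha
    have hmem : (π a - α) • (1 : A) ∈ R := by
      have := hsub _ ha _ (hspec a)
      rw [show a - α • (1:A) - (a - π a • 1) = (π a - α) • 1 by rw [sub_smul]; abel] at this
      exact this
    have hm2 : (π a - α) • (1 : A) ∈ R ∩ Set.range (fun α : F => α • (1 : A)) :=
      ⟨hmem, ⟨π a - α, rfl⟩⟩
    rw [hdisj, Set.mem_singleton_iff] at hm2
    exact sub_eq_zero.mp (hone _ hm2)
  refine ⟨π, hspec, huniq, ?_, ?_, ?_, ?_⟩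
  · intro a b
    apply huniq
    have hr := hspec a
    have hs := hspec b
    set r := a - π a • 1 with hrdef
    set s := b - π b • 1 with hsdef
    have hid : ∀ (x y : A) (α β : F),
        (x + α • 1) * (y + β • 1) - (α * β) • (1 : A) = x * y + β • x + α • y := by
      intro x y α β
      simp only [add_mul, mul_add, smul_add, smul_mul_assoc, mul_smul_comm,
        smul_smul, mul_one, one_mul, mul_comm β α]
      abel
    have ha' : a = r + π a • 1 := by rw [hrdef]; abel
    have hb' : b = s + π b • 1 := by rw [hsdef]; abel
    have hexp := hid r s (π a) (π b)
    rw [← ha', ← hb'] at hexp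
    rw [hexp]
    exact hadd _ (hadd _ (habs r s hs).1 _ (hsm _ _ hr)) _ (hsm _ _ hs)
  · intro c a
    apply huniq
    rw [show c • a - (c * π a) • (1 : A) = c • (a - π a • 1) by
      rw [smul_sub, smul_smul]]
    exact hsm _ _ (hspec a)
  · intro x hx
    apply huniq
    rw [show (1 : A) - x - (1 : F) • (1 : A) = -x by rw [one_smul]; abel]
    exact hneg x hx
  · intro a ha
    have := hspec a
    rw [ha, zero_smul, sub_zero] at this
    exact this

/-- The key step: the normalization map sends the circle loop of `R` into the circle
loop of `S` and is reversed by the corresponding map in the other direction. -/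
theorem psi_step' {F A : Type*} [Field F] [NonAssocRing A] [Module F A]
    [SMulCommClass F A A] [IsScalarTower F A A]
    (S : Set A) (hS : IsTwoSidedIdealSet S) (πR πS : A → F)
    (hSspec : ∀ a, a - πS a • 1 ∈ S)
    (hSmul : ∀ a b, πS (a * b) = πS a * πS b)
    (hS1 : πS 1 = 1)
    (R : Set A)
    (hRone : ∀ x ∈ R, πR (1 - x) = 1)
    (hRsmul : ∀ (c : F) (a : A), πR (c • a) = c * πR a)
    (x : A) (hx : x ∈ circleLoop R) :
    (1 - (πS (1 - x))⁻¹ • (1 - x)) ∈ circleLoop S ∧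
      1 - (πR (1 - (1 - (πS (1 - x))⁻¹ • (1 - x))))⁻¹ •
        (1 - (1 - (πS (1 - x))⁻¹ • (1 - x))) = x := by
  obtain ⟨hz, hadd, hneg, habs⟩ := hS
  have hsm : ∀ (c : F), ∀ r ∈ S, c • r ∈ S := fun c r hr => by
    have := (habs (c • (1 : A)) r hr).1
    rwa [smul_mul_assoc, one_mul] at this
  obtain ⟨hxR, hxq⟩ := hx
  obtain ⟨v, hv1, hv2⟩ := (isQuasireg_iff' x).mp hxq
  set u := 1 - x with hu
  set α := πS u with hα
  have hα1 : α * πS v = 1 := by rw [hα, ← hSmul, hv1, hS1]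
  have hαne : α ≠ 0 := left_ne_zero_of_mul_eq_one hα1
  have hmemS : 1 - α⁻¹ • u ∈ S := by
    have h := hSspec u
    rw [← hα] at h
    have key : ∀ (w : A) (c : F), c ≠ 0 → (1 : A) - c⁻¹ • w = -(c⁻¹ • (w - c • 1)) := by
      intro w c hc
      rw [smul_sub, smul_smul, inv_mul_cancel₀ hc, one_smul]
      abel
    rw [key u α hαne]
    exact hneg _ (hsm _ _ h)
  have hq : IsQuasireg (1 - α⁻¹ • u) := by
    rw [isQuasireg_iff']
    refine ⟨α • v, ?_, ?_⟩
    · rw [sub_sub_cancel, smul_mul_assoc, mul_smul_comm, smul_smul,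
        inv_mul_cancel₀ hαne, hv1, one_smul]
    · rw [sub_sub_cancel, smul_mul_assoc, mul_smul_comm, smul_smul,
        mul_inv_cancel₀ hαne, hv2, one_smul]
  refine ⟨⟨hmemS, hq⟩, ?_⟩
  have hπR : πR (1 - (1 - α⁻¹ • u)) = α⁻¹ := by
    rw [sub_sub_cancel, hRsmul, hu, hRone x hxR, mul_one]
  rw [hπR, sub_sub_cancel, inv_inv, smul_smul, mul_inv_cancel₀ hαne, one_smul,
    hu, sub_sub_cancel]

/-- **Corollary 1.9.**  Let `A` be a unital alternative algebra over a
field `F` and `R₁, R₂` two-sided ideals with `A = Rᵢ ⊕ F·1` for `i = 1, 2`.  Then the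
circle loops of `R₁` and `R₂` are isomorphic: there is a bijection `ψ` from the
quasiregular elements of `R₁` onto those of `R₂` with `ψ (x ∘ y) = ψ x ∘ ψ y`. -/
theorem circleLoop_iso (F A : Type*) [Field F] [NonAssocRing A]
    [Module F A] [SMulCommClass F A A] [IsScalarTower F A A] (h1 : (1 : A) ≠ 0)
    (altl : ∀ x y : A, x * (x * y) = (x * x) * y)
    (altr : ∀ x y : A, (y * x) * x = y * (x * x))
    (R₁ R₂ : Set A) (hR₁ : IsTwoSidedIdealSet R₁) (hR₂ : IsTwoSidedIdealSet R₂)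
    (hdisj₁ : R₁ ∩ Set.range (fun α : F => α • (1 : A)) = {0})
    (hsum₁ : ∀ a : A, ∃ r ∈ R₁, ∃ α : F, a = r + α • (1 : A))
    (hdisj₂ : R₂ ∩ Set.range (fun α : F => α • (1 : A)) = {0})
    (hsum₂ : ∀ a : A, ∃ r ∈ R₂, ∃ α : F, a = r + α • (1 : A)) :
    ∃ ψ : A → A, Set.BijOn ψ (circleLoop R₁) (circleLoop R₂) ∧
      ∀ x ∈ circleLoop R₁, ∀ y ∈ circleLoop R₁, ψ (circ x y) = circ (ψ x) (ψ y) := by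
  obtain ⟨π₁, spec₁, uniq₁, mul₁, smul₁, onesub₁, mem₁⟩ :=
    exists_proj' h1 R₁ hR₁ hdisj₁ hsum₁
  obtain ⟨π₂, spec₂, uniq₂, mul₂, smul₂, onesub₂, mem₂⟩ :=
    exists_proj' h1 R₂ hR₂ hdisj₂ hsum₂
  have π₁one : π₁ 1 = 1 := by
    have := onesub₁ 0 hR₁.1; rwa [sub_zero] at this
  have π₂one : π₂ 1 = 1 := by
    have := onesub₂ 0 hR₂.1; rwa [sub_zero] at this
  set ψ : A → A := fun x => 1 - (π₂ (1 - x))⁻¹ • (1 - x) with hψ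
  set φ : A → A := fun y => 1 - (π₁ (1 - y))⁻¹ • (1 - y) with hφ
  have h12 := fun x hx => psi_step' R₂ hR₂ π₁ π₂ spec₂ mul₂ π₂one R₁ onesub₁ smul₁ x hx
  have h21 := fun y hy => psi_step' R₁ hR₁ π₂ π₁ spec₁ mul₁ π₁one R₂ onesub₂ smul₂ y hy
  refine ⟨ψ, Set.InvOn.bijOn ⟨fun x hx => (h12 x hx).2, fun y hy => (h21 y hy).2⟩
    (fun x hx => (h12 x hx).1) (fun y hy => (h21 y hy).1), ?_⟩
  intro x hx y hy
  have hc : ∀ p q : A, circ p q = 1 - (1 - p) * (1 - q) := fun p q => by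
    rw [one_sub_mul_one_sub', sub_sub_cancel]
  rw [hψ]
  simp only
  rw [show (1 : A) - circ x y = (1 - x) * (1 - y) from (one_sub_mul_one_sub' x y).symm,
    mul₂, hc, sub_sub_cancel, sub_sub_cancel, smul_mul_assoc, mul_smul_comm,
    smul_smul, mul_inv]
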